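/- Let n ≥ 1 and let Φ : ℝⁿ → ℝⁿ be a bijective C² map with C² inverse. For a differentiable function g : ℝⁿ → ℝ and s ∈ {1,…,n} define the derivative in the s-th new coordinate by D̂_s g := (∂_s(g ∘ Φ^{−1})) ∘ Φ. Let F_1,…,F_n and h be C¹ functions ℝⁿ → ℝ and define F̂_s := ∑_{i=1}^n F_i · ∂_i Φ_s, where Φ_s is the s-th component of Φ. Then at every point of ℝⁿ: ∑_{i=1}^n ∂_i(F_i h) = ∑_{s=1}^n D̂_s(F̂_s h) − h · ∑_{i=1}^n ∑_{s=1}^n F_i · D̂_s(∂_i Φ_s). -/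

import Mathlib

noncomputable section

lemma aux_sum_smul_single {n : ℕ} (w : Fin n → ℝ) :
    ∑ s, w s • (Pi.single s 1 : Fin n → ℝ) = w := by
  funext j
  simp [Finset.sum_apply, Pi.single_apply]

/-- Partial derivative in the `i`-th coordinate of `ℝⁿ`. -/
def pd {n : ℕ} (i : Fin n) (f : (Fin n → ℝ) → ℝ) (y : Fin n → ℝ) : ℝ :=
  fderiv ℝ f y (Pi.single i 1)

/-- The derivative in the `s`-th new coordinate: `D̂_s g = (∂_s (g ∘ Φ⁻¹)) ∘ Φ`,
where `Ψ = Φ⁻¹`. -/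
def Dhat {n : ℕ} (Φ Ψ : (Fin n → ℝ) → (Fin n → ℝ)) (s : Fin n)
    (g : (Fin n → ℝ) → ℝ) (y : Fin n → ℝ) : ℝ :=
  fderiv ℝ (g ∘ Ψ) (Φ y) (Pi.single s 1)

/-- change of variables for the first order terms:
`∑_i ∂_i(F_i h) = ∑_s D̂_s(F̂_s h) − h ∑_{i,s} F_i D̂_s(∂_i Φ_s)`, where
`F̂_s = ∑_i F_i ∂_i Φ_s`. -/
theorem stmt17 (n : ℕ) (hn : 1 ≤ n)
    (Φ Ψ : (Fin n → ℝ) → (Fin n → ℝ))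
    (hbij : Function.Bijective Φ)
    (hΦ : ContDiff ℝ 2 Φ) (hΨ : ContDiff ℝ 2 Ψ)
    (hinv₁ : Function.LeftInverse Ψ Φ) (hinv₂ : Function.RightInverse Ψ Φ)
    (F : Fin n → (Fin n → ℝ) → ℝ) (h : (Fin n → ℝ) → ℝ)
    (hF : ∀ i, ContDiff ℝ 1 (F i)) (hh : ContDiff ℝ 1 h) :
    ∀ y : Fin n → ℝ,
      (∑ i, pd i (fun z => F i z * h z) y)
        = (∑ s, Dhat Φ Ψ s
              (fun z => (∑ i, F i z * pd i (fun w => Φ w s) z) * h z) y)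
          - h y * ∑ i, ∑ s, F i y * Dhat Φ Ψ s (pd i (fun w => Φ w s)) y := by
  intro y
  classical
  have hΦ1 : ContDiff ℝ 1 Φ := hΦ.of_le one_le_two
  have hΨ1 : ContDiff ℝ 1 Ψ := hΨ.of_le one_le_two
  have dΦ : Differentiable ℝ Φ := hΦ1.differentiable one_ne_zero
  have dΨ : Differentiable ℝ Ψ := hΨ1.differentiable one_ne_zero
  have dF : ∀ i, DifferentiableAt ℝ (F i) y := fun i => (hF i).differentiable one_ne_zero y
  have dh : DifferentiableAt ℝ h y := hh.differentiable one_ne_zero y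
  set e : Fin n → (Fin n → ℝ) := fun i => Pi.single i 1 with he
  set A := fderiv ℝ Φ y with hAdef
  set B := fderiv ℝ Ψ (Φ y) with hBdef
  have hBA : ∀ v, B (A v) = v := by
    intro v
    have h1 : fderiv ℝ (Ψ ∘ Φ) y = B.comp A := fderiv_comp y (dΨ (Φ y)) (dΦ y)
    have h2 : (Ψ ∘ Φ) = id := funext hinv₁
    rw [h2, fderiv_id] at h1
    have h3 := congrArg (fun L : (Fin n → ℝ) →L[ℝ] (Fin n → ℝ) => L v) h1
    simpa using h3.symm
  set b : Fin n → (Fin n → ℝ) := fun s => B (e s) with hbdef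
  -- Dhat as a directional derivative at y
  have hDhat : ∀ (g : (Fin n → ℝ) → ℝ) (s : Fin n), DifferentiableAt ℝ g y →
      Dhat Φ Ψ s g y = fderiv ℝ g y (b s) := by
    intro g s hg
    unfold Dhat
    have h1 : fderiv ℝ (g ∘ Ψ) (Φ y) = (fderiv ℝ g (Ψ (Φ y))).comp (fderiv ℝ Ψ (Φ y)) :=
      fderiv_comp (Φ y) (by rw [hinv₁ y]; exact hg) (dΨ (Φ y))
    rw [h1, hinv₁ y]
    rfl
  -- coordinates of Φ
  have hΦs : ∀ s, ContDiff ℝ 2 (fun w => Φ w s) := fun s => contDiff_pi.mp hΦ s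
  have hfc : ∀ (s : Fin n) (x : Fin n → ℝ),
      fderiv ℝ (fun w => Φ w s) x
        = (ContinuousLinearMap.proj (R := ℝ) (φ := fun _ : Fin n => ℝ) s).comp
            (fderiv ℝ Φ x) := by
    intro s x
    exact (((ContinuousLinearMap.proj (R := ℝ) (φ := fun _ : Fin n => ℝ) s).hasFDerivAt).comp
      x (dΦ x).hasFDerivAt).fderiv
  set p : Fin n → Fin n → (Fin n → ℝ) → ℝ := fun i s => pd i (fun w => Φ w s) with hpdef
  have hpC : ∀ i s, ContDiff ℝ 1 (p i s) := by
    intro i s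
    have h1 : ContDiff ℝ 1 (fderiv ℝ (fun w => Φ w s)) :=
      (hΦs s).fderiv_right (by norm_num)
    exact (ContinuousLinearMap.apply ℝ ℝ (e i)).contDiff.comp h1
  have dp : ∀ i s, DifferentiableAt ℝ (p i s) y := fun i s => (hpC i s).differentiable one_ne_zero y
  have hpy : ∀ i s, p i s y = A (e i) s := by
    intro i s
    show fderiv ℝ (fun w => Φ w s) y (e i) = A (e i) s
    rw [hfc s y]
    rfl
  -- key cancellation
  have key : ∀ (L : (Fin n → ℝ) →L[ℝ] ℝ) (i : Fin n),
      ∑ s, A (e i) s * L (b s) = L (e i) := by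
    intro L i
    calc ∑ s, A (e i) s * L (b s) = ∑ s, L (A (e i) s • b s) := by
          simp [smul_eq_mul]
      _ = L (∑ s, A (e i) s • B (e s)) := by rw [map_sum]
      _ = L (B (∑ s, A (e i) s • e s)) := by rw [map_sum]; simp
      _ = L (B (A (e i))) := by
          rw [show (∑ s, A (e i) s • e s) = A (e i) from by
            simp only [he]; exact aux_sum_smul_single _]
      _ = L (e i) := by rw [hBA]
  -- rewrite LHS
  have lhs_eq : ∀ i, pd i (fun z => F i z * h z) y
      = F i y * fderiv ℝ h y (e i) + h y * fderiv ℝ (F i) y (e i) := by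
    intro i
    show fderiv ℝ (fun z => F i z * h z) y (e i) = _
    rw [fderiv_fun_mul (dF i) dh]
    simp [smul_eq_mul]
  -- rewrite the inner Dhat terms
  have inner_eq : ∀ i s, Dhat Φ Ψ s (pd i (fun w => Φ w s)) y = fderiv ℝ (p i s) y (b s) :=
    fun i s => hDhat (p i s) s (dp i s)
  -- differentiability of Fhat s
  have dG : ∀ s, DifferentiableAt ℝ (fun z => ∑ i, F i z * p i s z) y := by
    intro s
    exact DifferentiableAt.fun_sum fun i _ => (dF i).mul ((hpC i s).differentiable one_ne_zero y)
  have rhs1 : ∀ s, Dhat Φ Ψ s (fun z => (∑ i, F i z * pd i (fun w => Φ w s) z) * h z) y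
      = (∑ i, F i y * A (e i) s) * fderiv ℝ h y (b s)
        + h y * ∑ i, (F i y * fderiv ℝ (p i s) y (b s)
            + A (e i) s * fderiv ℝ (F i) y (b s)) := by
    intro s
    rw [hDhat _ s ((dG s).fun_mul dh)]
    rw [fderiv_fun_mul (dG s) dh]
    rw [fderiv_fun_sum (fun i _ => (dF i).fun_mul ((hpC i s).differentiable one_ne_zero y))]
    simp only [ContinuousLinearMap.add_apply, ContinuousLinearMap.smul_apply,
      ContinuousLinearMap.sum_apply, smul_eq_mul]
    congr 1
    · congr 1
      exact Finset.sum_congr rfl fun i _ => by rw [hpy]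
    · congr 1
      refine Finset.sum_congr rfl fun i _ => ?_
      rw [fderiv_fun_mul (dF i) ((hpC i s).differentiable one_ne_zero y)]
      simp only [ContinuousLinearMap.add_apply, ContinuousLinearMap.smul_apply, smul_eq_mul]
      rw [hpy]
  simp only [lhs_eq, rhs1, inner_eq]
  -- now pure algebra with sums
  have comm1 : ∑ s, ((∑ i, F i y * A (e i) s) * fderiv ℝ h y (b s))
      = ∑ i, F i y * fderiv ℝ h y (e i) := by
    calc ∑ s, (∑ i, F i y * A (e i) s) * fderiv ℝ h y (b s)
        = ∑ s, ∑ i, F i y * (A (e i) s * fderiv ℝ h y (b s)) := by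
          refine Finset.sum_congr rfl fun s _ => ?_
          rw [Finset.sum_mul]
          exact Finset.sum_congr rfl fun i _ => by ring
      _ = ∑ i, ∑ s, F i y * (A (e i) s * fderiv ℝ h y (b s)) := Finset.sum_comm
      _ = ∑ i, F i y * ∑ s, A (e i) s * fderiv ℝ h y (b s) := by
          simp [Finset.mul_sum]
      _ = ∑ i, F i y * fderiv ℝ h y (e i) := by
          exact Finset.sum_congr rfl fun i _ => by rw [key]
  have comm2 : ∑ s, (h y * ∑ i, (F i y * fderiv ℝ (p i s) y (b s)
        + A (e i) s * fderiv ℝ (F i) y (b s)))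
      = h y * (∑ i, ∑ s, F i y * fderiv ℝ (p i s) y (b s))
        + ∑ i, h y * fderiv ℝ (F i) y (e i) := by
    calc ∑ s, h y * ∑ i, (F i y * fderiv ℝ (p i s) y (b s)
          + A (e i) s * fderiv ℝ (F i) y (b s))
        = ∑ s, ∑ i, (h y * (F i y * fderiv ℝ (p i s) y (b s))
            + h y * (A (e i) s * fderiv ℝ (F i) y (b s))) := by
          simp [Finset.mul_sum, mul_add]
      _ = ∑ i, ∑ s, (h y * (F i y * fderiv ℝ (p i s) y (b s))
            + h y * (A (e i) s * fderiv ℝ (F i) y (b s))) := Finset.sum_comm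
      _ = (∑ i, ∑ s, h y * (F i y * fderiv ℝ (p i s) y (b s)))
            + ∑ i, ∑ s, h y * (A (e i) s * fderiv ℝ (F i) y (b s)) := by
          rw [← Finset.sum_add_distrib]
          exact Finset.sum_congr rfl fun i _ => Finset.sum_add_distrib
      _ = h y * (∑ i, ∑ s, F i y * fderiv ℝ (p i s) y (b s))
            + ∑ i, h y * fderiv ℝ (F i) y (e i) := by
          congr 1
          · simp [Finset.mul_sum]
          · refine Finset.sum_congr rfl fun i _ => ?_
            calc ∑ s, h y * (A (e i) s * fderiv ℝ (F i) y (b s))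
                = h y * ∑ s, A (e i) s * fderiv ℝ (F i) y (b s) := by
                  rw [Finset.mul_sum]
              _ = h y * fderiv ℝ (F i) y (e i) := by rw [key]
  rw [Finset.sum_add_distrib, Finset.sum_add_distrib, comm1, comm2]
  ring

end
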